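/- Any line segment contained in a simple polygon has length at most half the perimeter of that polygon. -/

import Mathlib

open scoped Real
noncomputable section

/-- Points in the Euclidean plane. -/
abbrev Pt : Type := EuclideanSpace ℝ (Fin 2)

/-- Two closed segments `ab` and `cd` properly intersect: their relative
interiors (open segments) share a point. -/
def ProperInter (a b c d : Pt) : Prop :=
  (openSegment ℝ a b ∩ openSegment ℝ c d).Nonempty

/-- `uv` (in either orientation) is one of the constraints in `S`. -/
def IsConstraintOf (S : Set (Pt × Pt)) (u v : Pt) : Prop := (u, v) ∈ S ∨ (v, u) ∈ S

/-- `u` and `v` are visible with respect to the constraint set `S`: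
either `uv` is itself a constraint, or the segment `uv` does not properly
intersect any constraint. -/
def Visible (S : Set (Pt × Pt)) (u v : Pt) : Prop :=
  IsConstraintOf S u v ∨ ∀ c ∈ S, ¬ ProperInter u v c.1 c.2

/-- The constraints have endpoints in `P` and no two of them properly intersect. -/
def ValidConstraints (P : Finset Pt) (S : Set (Pt × Pt)) : Prop :=
  (∀ c ∈ S, c.1 ∈ P ∧ c.2 ∈ P ∧ c.1 ≠ c.2) ∧
  (∀ c ∈ S, ∀ c' ∈ S, c ≠ c' → c ≠ (c'.2, c'.1) → ¬ ProperInter c.1 c.2 c'.1 c'.2)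

/-- A list of points is a path in the (symmetric) edge set `E`. -/
def IsPathIn (E : Set (Pt × Pt)) (p : List Pt) : Prop :=
  List.Chain' (fun a b => (a, b) ∈ E ∨ (b, a) ∈ E) p

/-- Euclidean length of a polygonal path given by a list of points. -/
def pathLen : List Pt → ℝ
  | a :: b :: r => dist a b + pathLen (b :: r)
  | _ => 0

/-- Shortest-path distance between `s` and `t` in the edge set `E`
(with Euclidean edge weights). -/
def sdist (E : Set (Pt × Pt)) (s t : Pt) : ℝ :=
  sInf { L | ∃ p : List Pt, IsPathIn E p ∧ p.head? = some s ∧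
              p.getLast? = some t ∧ pathLen p = L }
/-- The `i`-th boundary edge of the polygon with vertices `V 0, …, V (n-1)`. -/
def polyEdge (n : ℕ) [NeZero n] (V : Fin n → Pt) (i : Fin n) : Set Pt :=
  segment ℝ (V i) (V (i + 1))

/-- The boundary (closed curve) of the polygon. -/
def polyBnd (n : ℕ) [NeZero n] (V : Fin n → Pt) : Set Pt := ⋃ i, polyEdge n V i

/-- The perimeter of the polygon: the sum of the lengths of its boundary edges. -/
def perimeter (n : ℕ) [NeZero n] (V : Fin n → Pt) : ℝ := ∑ i, dist (V i) (V (i + 1))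

/-- `V` describes a simple polygon: at least three vertices, all distinct, and
two distinct boundary edges meet only in shared endpoints. -/
def IsSimplePolygon (n : ℕ) [NeZero n] (V : Fin n → Pt) : Prop :=
  3 ≤ n ∧ Function.Injective V ∧
  ∀ i j : Fin n, i ≠ j →
    polyEdge n V i ∩ polyEdge n V j ⊆
      ({V i, V (i + 1)} : Set Pt) ∩ ({V j, V (j + 1)} : Set Pt)

/-- The closed region bounded by a simple polygon: the boundary together with
the bounded connected components of its complement. -/
def polyRegion (n : ℕ) [NeZero n] (V : Fin n → Pt) : Set Pt :=
  polyBnd n V ∪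
  {x | x ∉ polyBnd n V ∧ Bornology.IsBounded (connectedComponentIn (polyBnd n V)ᶜ x)}

open Fin.CommRing in
/-- Chain of triangle inequalities along consecutive edges. -/
lemma dist_le_sum_edges (n : ℕ) (V : Fin (n + 1) → Pt) (i : Fin (n + 1)) (k : ℕ) :
    dist (V i) (V (i + (k : Fin (n + 1)))) ≤
      ∑ m ∈ Finset.range k, dist (V (i + (m : Fin (n + 1)))) (V (i + (m : Fin (n + 1)) + 1)) := by
  induction k with
  | zero => simp
  | succ k ih =>
    rw [Finset.sum_range_succ]
    have h1 : (((k : ℕ) + 1 : ℕ) : Fin (n + 1)) = (k : Fin (n + 1)) + 1 := by push_cast; ring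
    calc dist (V i) (V (i + ((k + 1 : ℕ) : Fin (n + 1))))
        ≤ dist (V i) (V (i + (k : Fin (n + 1)))) +
            dist (V (i + (k : Fin (n + 1)))) (V (i + ((k + 1 : ℕ) : Fin (n + 1)))) :=
          dist_triangle _ _ _
      _ ≤ _ := by
          rw [h1, ← add_assoc]
          exact add_le_add_left ih _

open Fin.CommRing in
/-- Any two vertices of a polygon are within half the perimeter of each other. -/
lemma vertex_dist_le (n : ℕ) (V : Fin (n + 1) → Pt) (i j : Fin (n + 1)) :
    2 * dist (V i) (V j) ≤ perimeter (n + 1) V := by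
  set k : ℕ := (j - i).val with hk
  have hkN : k ≤ n + 1 := le_of_lt (j - i).isLt
  have hik : i + (k : Fin (n + 1)) = j := by
    rw [hk, Fin.cast_val_eq_self, add_sub_cancel]
  have hNk : j + ((n + 1 - k : ℕ) : Fin (n + 1)) = i := by
    have : ((n + 1 - k : ℕ) : Fin (n + 1)) = -(k : Fin (n + 1)) := by
      rw [Nat.cast_sub hkN]
      simp
    rw [this, ← hik]
    abel
  set e : ℕ → ℝ := fun m => dist (V (i + (m : Fin (n + 1)))) (V (i + (m : Fin (n + 1)) + 1)) with he
  have hperim : perimeter (n + 1) V = ∑ m ∈ Finset.range (n + 1), e m := by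
    rw [perimeter, ← Fin.sum_univ_eq_sum_range (fun m => e m)]
    rw [← Equiv.sum_comp (Equiv.addLeft i) (fun x => dist (V x) (V (x + 1)))]
    refine Finset.sum_congr rfl fun x _ => ?_
    simp [he, Fin.cast_val_eq_self]
  have hsplit : ∑ m ∈ Finset.range (n + 1), e m =
      ∑ m ∈ Finset.range k, e m + ∑ m ∈ Finset.range (n + 1 - k), e (k + m) := by
    rw [← Finset.sum_range_add_sum_Ico _ hkN, Finset.sum_Ico_eq_sum_range]
  have h1 : dist (V i) (V j) ≤ ∑ m ∈ Finset.range k, e m := by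
    have := dist_le_sum_edges n V i k
    rwa [hik] at this
  have h2 : dist (V i) (V j) ≤ ∑ m ∈ Finset.range (n + 1 - k), e (k + m) := by
    have := dist_le_sum_edges n V j (n + 1 - k)
    rw [hNk, dist_comm (V j)] at this
    refine this.trans (le_of_eq (Finset.sum_congr rfl fun m _ => ?_))
    have hcast : i + ((k + m : ℕ) : Fin (n + 1)) = j + (m : Fin (n + 1)) := by
      rw [Nat.cast_add, ← add_assoc, hik]
    simp only [he]
    rw [hcast]
  rw [hperim, hsplit, two_mul]
  exact add_le_add h1 h2

/-- The polygon region is contained in the convex hull of the vertices. -/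
lemma polyRegion_subset_hull (n : ℕ) [NeZero n] (V : Fin n → Pt) :
    polyRegion n V ⊆ convexHull ℝ (Set.range V) := by
  set K := convexHull ℝ (Set.range V) with hK
  have hKconv : Convex ℝ K := convex_convexHull ℝ _
  have hKclosed : IsClosed K := ((Set.finite_range V).isCompact_convexHull ℝ).isClosed
  have hbnd : polyBnd n V ⊆ K := by
    rintro x hx
    rw [polyBnd, Set.mem_iUnion] at hx
    obtain ⟨i, hi⟩ := hx
    have h1 : V i ∈ K := subset_convexHull ℝ _ ⟨i, rfl⟩
    have h2 : V (i + 1) ∈ K := subset_convexHull ℝ _ ⟨i + 1, rfl⟩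
    exact hKconv.segment_subset h1 h2 hi
  rintro x (hx | ⟨hx, hbd⟩)
  · exact hbnd hx
  by_contra hxK
  obtain ⟨f, u, hfu, hux⟩ := geometric_hahn_banach_closed_point hKconv hKclosed hxK
  -- the open half space beyond the hull
  set H : Set Pt := {y | u < f y} with hH
  have hHx : x ∈ H := hux
  have hHsub : H ⊆ (polyBnd n V)ᶜ := by
    intro y hy hyb
    exact absurd (hfu y (hbnd hyb)) (not_lt.2 (le_of_lt hy))
  have hHconv : Convex ℝ H := convex_halfSpace_gt (f.toLinearMap.isLinear) u
  have hHcomp : H ⊆ connectedComponentIn (polyBnd n V)ᶜ x :=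
    hHconv.isPreconnected.subset_connectedComponentIn hHx hHsub
  have hHbd : Bornology.IsBounded H := hbd.subset hHcomp
  -- but H is unbounded: it contains a ray
  have hf0 : f ≠ 0 := by
    rintro rfl
    have h0 : V 0 ∈ K := subset_convexHull ℝ _ ⟨0, rfl⟩
    have h1 := hfu _ h0
    have h2 := hux
    simp only [ContinuousLinearMap.zero_apply] at h1 h2
    linarith
  obtain ⟨v, hv⟩ : ∃ v, f v = 1 := by
    obtain ⟨w, hw⟩ := DFunLike.ne_iff.1 hf0
    exact ⟨(f w)⁻¹ • w, by simp [inv_mul_cancel₀ (by simpa using hw)]⟩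
  have hv0 : v ≠ 0 := by rintro rfl; simp at hv
  obtain ⟨R, hR⟩ := (Metric.isBounded_iff_subset_closedBall x).1 hHbd
  set t : ℝ := (|R| + 1) / ‖v‖ with ht
  have hvpos : (0:ℝ) < ‖v‖ := norm_pos_iff.2 hv0
  have htpos : 0 < t := div_pos (by positivity) hvpos
  have hmem : x + t • v ∈ H := by
    simp only [hH, Set.mem_setOf_eq, map_add, map_smul, hv, smul_eq_mul, mul_one]
    linarith [hux]
  have hRle := hR hmem
  rw [Metric.mem_closedBall] at hRle
  have hnorm : dist (x + t • v) x = |R| + 1 := by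
    rw [dist_eq_norm, add_sub_cancel_left, norm_smul, Real.norm_eq_abs, abs_of_pos htpos, ht,
      div_mul_cancel₀ _ (ne_of_gt hvpos)]
  rw [hnorm] at hRle
  linarith [le_abs_self R]

/-- Any line segment contained in (the closed region bounded by) a simple
polygon has length at most half the perimeter of the polygon. -/
theorem segment_le_half_perimeter (n : ℕ) [NeZero n] (V : Fin n → Pt)
    (hV : IsSimplePolygon n V) (a b : Pt)
    (hab : segment ℝ a b ⊆ polyRegion n V) :
    dist a b ≤ perimeter n V / 2 := by
  obtain ⟨m, rfl⟩ : ∃ m, n = m + 1 := ⟨n - 1, (Nat.succ_pred_eq_of_ne_zero (NeZero.ne n)).symm⟩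
  set K := convexHull ℝ (Set.range V) with hK
  have ha : a ∈ K := polyRegion_subset_hull _ V (hab (left_mem_segment ℝ a b))
  have hb : b ∈ K := polyRegion_subset_hull _ V (hab (right_mem_segment ℝ a b))
  set D : ℝ := perimeter (m + 1) V / 2 with hD
  have hvert : ∀ i j : Fin (m + 1), dist (V i) (V j) ≤ D := by
    intro i j
    have := vertex_dist_le m V i j
    rw [hD]; linarith
  have hb' : ∀ i : Fin (m + 1), dist (V i) b ≤ D := by
    intro i
    have : K ⊆ Metric.closedBall (V i) D := by
      apply convexHull_min _ (convex_closedBall _ _)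
      rintro _ ⟨j, rfl⟩
      exact Metric.mem_closedBall.2 (by rw [dist_comm]; exact hvert i j)
    have := this hb
    rw [Metric.mem_closedBall, dist_comm] at this
    exact this
  have : K ⊆ Metric.closedBall b D := by
    apply convexHull_min _ (convex_closedBall _ _)
    rintro _ ⟨i, rfl⟩
    exact Metric.mem_closedBall.2 (hb' i)
  have := this ha
  rwa [Metric.mem_closedBall] at this
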